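/- arXiv:2003.01574 — 4 statements merged into one kernel-verified Lean document; each statement's English description precedes it below -/
import Mathlib

section
/- Let d ≥ 1 and let w_1, …, w_k be non-empty words in the alphabet {1,…,d}. Then in the shuffle algebra T(ℝ^d): w_1 ⧢ w_2 ⧢ ⋯ ⧢ w_k = Σ_{σ∈S_k} w_{σ(1)} ≻ w_{σ(2)} ≻ ⋯ ≻ w_{σ(k)}, where the iterated right half-shuffle products on the right-hand side are bracketed from the left. -/
open scoped BigOperators

namespace ShufflePaper

variable {α : Type*}

/-- All shuffles (interleavings) of two words, with multiplicity. -/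
def shuffles : List α → List α → Multiset (List α)
  | [], ys => {ys}
  | x :: xs, [] => {x :: xs}
  | x :: xs, y :: ys =>
      ((shuffles xs (y :: ys)).map (x :: ·)) + ((shuffles (x :: xs) ys).map (y :: ·))
  termination_by l₁ l₂ => l₁.length + l₂.length

/-- The element of the shuffle algebra corresponding to a multiset of words. -/
noncomputable def ofMS (m : Multiset (List α)) : List α →₀ ℝ :=
  (m.map fun l => Finsupp.single l (1 : ℝ)).sum

/-- The shuffle product on the shuffle algebra `T(ℝ^d)` (bilinear extension). -/
noncomputable def sh (x y : List α →₀ ℝ) : List α →₀ ℝ :=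
  x.sum fun v a => y.sum fun w b => (a * b) • ofMS (shuffles v w)

/-- Iterated shuffle product of a list of elements (empty word is the unit). -/
noncomputable def shProd : List (List α →₀ ℝ) → (List α →₀ ℝ)
  | [] => Finsupp.single [] 1
  | x :: xs => sh x (shProd xs)

/-- Determinant in the commutative ring `(T(ℝ^d), ⧢)` via the Leibniz formula. -/
noncomputable def detSh {n : ℕ} (M : Fin n → Fin n → (List α →₀ ℝ)) : List α →₀ ℝ :=
  ∑ σ : Equiv.Perm (Fin n), (Equiv.Perm.sign σ : ℤ) •
    shProd ((List.finRange n).map fun i => M (σ i) i)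

/-- The matrix `W_d` whose `(i,j)` entry is the two-letter word `ij`. -/
noncomputable def W (d : ℕ) : Fin d → Fin d → (List (Fin d) →₀ ℝ) :=
  fun i j => Finsupp.single [i, j] 1

/-- `inv(t_{1,d}) = Σ_σ sign(σ) σ(1)⋯σ(d)`. -/
noncomputable def invT1 (d : ℕ) : List (Fin d) →₀ ℝ :=
  ∑ σ : Equiv.Perm (Fin d), (Equiv.Perm.sign σ : ℤ) •
    Finsupp.single ((List.finRange d).map σ) 1

/-- `inv(t_{2,d}) = Σ_{σ,τ} sign(σ)sign(τ) σ(1)τ(1)⋯σ(d)τ(d)`. -/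
noncomputable def invT2 (d : ℕ) : List (Fin d) →₀ ℝ :=
  ∑ σ : Equiv.Perm (Fin d), ∑ τ : Equiv.Perm (Fin d),
    ((Equiv.Perm.sign σ : ℤ) * (Equiv.Perm.sign τ : ℤ)) •
      Finsupp.single ((List.finRange d).flatMap fun i => [σ i, τ i]) 1

/- Right half-shuffle of two words: `u ≻ (v·i) = (u ⧢ v)·i`; zero if the
second word is empty. -/
open Classical in
noncomputable def hsW (u w : List α) : List α →₀ ℝ :=
  if h : w = [] then 0
  else ofMS ((shuffles u w.dropLast).map fun l => l ++ [w.getLast h])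

/-- Right half-shuffle product (bilinear extension). -/
noncomputable def hs (x y : List α →₀ ℝ) : List α →₀ ℝ :=
  x.sum fun v a => y.sum fun w b => (a * b) • hsW v w

/-- Iterated right half-shuffle of a list of words, bracketed from the left. -/
noncomputable def hsList : List (List α) → (List α →₀ ℝ)
  | [] => 0
  | w :: ws => ws.foldl (fun acc u => hs acc (Finsupp.single u 1)) (Finsupp.single w 1)

/-- Action of `σ ∈ S_n` on the span of words, permuting letter positions of
words of length `n` (letter in position `σ(k)` of `σ·w` is `w_k`); words of
other lengths are left untouched. -/
noncomputable def permAct {d : ℕ} (n : ℕ) (σ : Equiv.Perm (Fin n))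
    (x : List (Fin d) →₀ ℝ) : List (Fin d) →₀ ℝ :=
  x.sum fun w a =>
    if h : w.length = n then
      Finsupp.single (List.ofFn fun p : Fin n => w.get (Fin.cast h.symm (σ⁻¹ p))) a
    else Finsupp.single w a

/-- The subgroup `H ≤ S_{2d}` generated by the transpositions `(2i−1, 2i+1)` and
`(2i, 2i+2)`, `1 ≤ i ≤ d−1` (0-indexed: all swaps `(k, k+2)` with `k+2 < 2d`). -/
def Hgrp (d : ℕ) : Subgroup (Equiv.Perm (Fin (2 * d))) :=
  Subgroup.closure
    {g | ∃ k : ℕ, ∃ hk : k + 2 < 2 * d, g = Equiv.swap ⟨k, by omega⟩ ⟨k + 2, hk⟩}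

/-- Pfaffian in the shuffle algebra, via the sum over permutations. -/
noncomputable def pfSh {n : ℕ} (A : Fin n → Fin n → (List α →₀ ℝ)) : List α →₀ ℝ :=
  ((2 ^ (n / 2) * (n / 2).factorial : ℝ))⁻¹ •
    ∑ π : Equiv.Perm (Fin n), (Equiv.Perm.sign π : ℤ) •
      shProd ((List.finRange (n / 2)).map fun i : Fin (n / 2) =>
        A (π ⟨2 * (i : ℕ), by have := i.isLt; omega⟩)
          (π ⟨2 * (i : ℕ) + 1, by have := i.isLt; omega⟩))

/-- The matrix `Z_d` from de Bruijn's formula, odd case. -/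
noncomputable def Z (d : ℕ) : Fin (d + 1) → Fin (d + 1) → (List (Fin d) →₀ ℝ) :=
  fun i j =>
    if hi : (i : ℕ) < d then
      if hj : (j : ℕ) < d then
        Finsupp.single [⟨i, hi⟩, ⟨j, hj⟩] 1 - Finsupp.single [⟨j, hj⟩, ⟨i, hi⟩] 1
      else Finsupp.single [⟨i, hi⟩] 1
    else if hj : (j : ℕ) < d then -Finsupp.single [⟨j, hj⟩] 1
    else 0

section Part1
variable {α : Type*}

lemma shuffles_nil_left (ys : List α) : shuffles ([] : List α) ys = {ys} := by
  rw [shuffles]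

lemma shuffles_nil_right (xs : List α) : shuffles xs ([] : List α) = {xs} := by
  cases xs <;> rw [shuffles]

lemma shuffles_cons_cons (x y : α) (xs ys : List α) :
    shuffles (x::xs) (y::ys) =
      ((shuffles xs (y :: ys)).map (x :: ·)) + ((shuffles (x :: xs) ys).map (y :: ·)) := by
  rw [shuffles]

lemma shuffles_comm (u v : List α) : shuffles u v = shuffles v u := by
  induction u, v using shuffles.induct with
  | case1 ys => rw [shuffles_nil_left, shuffles_nil_right]
  | case2 x xs => rw [shuffles_nil_left, shuffles_nil_right]
  | case3 x xs y ys ih1 ih2 =>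
      rw [shuffles_cons_cons, shuffles_cons_cons, ih1, ih2, add_comm]

lemma bind_singleton_id (m : Multiset (List α)) : (m.bind fun s => ({s} : Multiset (List α))) = m := by
  simpa using Multiset.bind_singleton m (fun s => s)

/-- last-letter recursion for shuffles -/
lemma shuffles_concat_concat (u v : List α) (a b : α) :
    shuffles (u ++ [a]) (v ++ [b]) =
      ((shuffles u (v ++ [b])).map (· ++ [a])) + ((shuffles (u ++ [a]) v).map (· ++ [b])) := by
  suffices h : ∀ (N : ℕ) (u v : List α), u.length + v.length ≤ N →
      shuffles (u ++ [a]) (v ++ [b]) =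
      ((shuffles u (v ++ [b])).map (· ++ [a])) + ((shuffles (u ++ [a]) v).map (· ++ [b])) from
    h (u.length + v.length) u v le_rfl
  intro N
  induction N with
  | zero =>
      intro u v h
      have hu : u = [] := by cases u <;> simp_all
      have hv : v = [] := by cases v <;> simp_all
      subst hu; subst hv
      simp [shuffles_cons_cons, shuffles_nil_left, shuffles_nil_right, add_comm]
  | succ N IH =>
      intro u v h
      match u, v with
      | [], [] =>
          simp [shuffles_cons_cons, shuffles_nil_left, shuffles_nil_right, add_comm]
      | [], y :: ys =>
          have h1 := IH [] ys (by simp at h ⊢; omega)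
          simp only [List.nil_append] at h1 ⊢
          rw [List.cons_append, shuffles_cons_cons, shuffles_nil_left,
            shuffles_cons_cons, shuffles_nil_left, h1]
          simp only [Multiset.map_add, Multiset.map_map, Function.comp,
            Multiset.map_singleton, shuffles_nil_left, List.cons_append]
          abel
      | x :: xs, [] =>
          have h1 := IH xs [] (by simp at h ⊢; omega)
          simp only [List.nil_append] at h1 ⊢
          rw [List.cons_append, shuffles_cons_cons, shuffles_nil_right,
            shuffles_cons_cons, shuffles_nil_right, h1]
          simp only [Multiset.map_add, Multiset.map_map, Function.comp,
            Multiset.map_singleton, shuffles_nil_right, List.cons_append]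
          abel
      | x :: xs, y :: ys =>
          have h1 := IH xs (y :: ys) (by simp at h ⊢; omega)
          have h2 := IH (x :: xs) ys (by simp at h ⊢; omega)
          simp only [List.cons_append] at h1 h2 ⊢
          rw [shuffles_cons_cons, h1, h2, shuffles_cons_cons x y xs (ys ++ [b]),
            shuffles_cons_cons x y (xs ++ [a]) ys]
          simp only [Multiset.map_add, Multiset.map_map, Function.comp, List.cons_append]
          abel

/-- associativity of shuffles at the multiset level -/
lemma shuffles_assoc (u v t : List α) :
    (shuffles u v).bind (fun s => shuffles s t) =
      (shuffles v t).bind (fun s => shuffles u s) := by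
  suffices h : ∀ (N : ℕ) (u v t : List α), u.length + v.length + t.length ≤ N →
      (shuffles u v).bind (fun s => shuffles s t) =
      (shuffles v t).bind (fun s => shuffles u s) from
    h _ u v t le_rfl
  intro N
  induction N with
  | zero =>
      intro u v t h
      have hu : u = [] := by cases u <;> simp_all
      subst hu
      simp [shuffles_nil_left, Multiset.singleton_bind, bind_singleton_id]
  | succ N IH =>
      intro u v t h
      match u, v, t with
      | [], v, t =>
          simp [shuffles_nil_left, Multiset.singleton_bind, bind_singleton_id]
      | x :: xs, [], t =>
          simp [shuffles_nil_left, shuffles_nil_right, Multiset.singleton_bind]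
      | x :: xs, y :: ys, [] =>
          simp [shuffles_nil_left, shuffles_nil_right, Multiset.singleton_bind,
            bind_singleton_id]
      | x :: xs, y :: ys, z :: zs =>
          have e1 : (shuffles xs (y :: ys)).bind (fun s => shuffles s (z :: zs)) =
              (shuffles (y :: ys) (z :: zs)).bind (fun s => shuffles xs s) :=
            IH xs (y :: ys) (z :: zs) (by simp at h ⊢; omega)
          have e2 : (shuffles (x :: xs) ys).bind (fun s => shuffles s (z :: zs)) =
              (shuffles ys (z :: zs)).bind (fun s => shuffles (x :: xs) s) :=
            IH (x :: xs) ys (z :: zs) (by simp at h ⊢; omega)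
          have e3 : (shuffles (x :: xs) (y :: ys)).bind (fun s => shuffles s zs) =
              (shuffles (y :: ys) zs).bind (fun s => shuffles (x :: xs) s) :=
            IH (x :: xs) (y :: ys) zs (by simp at h ⊢; omega)
          -- expanded form of e3
          have e3' : (shuffles xs (y :: ys)).bind (fun s => shuffles (x :: s) zs)
              + (shuffles (x :: xs) ys).bind (fun s => shuffles (y :: s) zs)
              = (shuffles (y :: ys) zs).bind (fun s => shuffles (x :: xs) s) := by
            rw [← e3, shuffles_cons_cons x y, Multiset.add_bind, Multiset.bind_map,
              Multiset.bind_map]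
          -- pure expansion (no IH)
          have e0' : (shuffles ys (z :: zs)).bind (fun s => shuffles xs (y :: s))
              + (shuffles (y :: ys) zs).bind (fun s => shuffles xs (z :: s))
              = (shuffles (y :: ys) (z :: zs)).bind (fun s => shuffles xs s) := by
            rw [shuffles_cons_cons y z, Multiset.add_bind, Multiset.bind_map,
              Multiset.bind_map]
          calc (shuffles (x :: xs) (y :: ys)).bind (fun s => shuffles s (z :: zs))
              = (shuffles xs (y :: ys)).bind (fun s => shuffles (x :: s) (z :: zs))
                + (shuffles (x :: xs) ys).bind (fun s => shuffles (y :: s) (z :: zs)) := by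
                rw [shuffles_cons_cons x y, Multiset.add_bind, Multiset.bind_map,
                  Multiset.bind_map]
            _ = (((shuffles xs (y :: ys)).bind (fun s => shuffles s (z :: zs))).map (x :: ·)
                + ((shuffles xs (y :: ys)).bind (fun s => shuffles (x :: s) zs)).map (z :: ·))
                + (((shuffles (x :: xs) ys).bind (fun s => shuffles s (z :: zs))).map (y :: ·)
                + ((shuffles (x :: xs) ys).bind (fun s => shuffles (y :: s) zs)).map (z :: ·)) := by
                rw [Multiset.bind_congr (fun s _ => shuffles_cons_cons x z s zs),
                  Multiset.bind_congr (fun s _ => shuffles_cons_cons y z s zs),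
                  Multiset.bind_add, Multiset.bind_add]
                simp only [← Multiset.map_bind]
            _ = ((shuffles (y :: ys) (z :: zs)).bind (fun s => shuffles xs s)).map (x :: ·)
                + ((shuffles ys (z :: zs)).bind (fun s => shuffles (x :: xs) s)).map (y :: ·)
                + (((shuffles xs (y :: ys)).bind (fun s => shuffles (x :: s) zs))
                  + ((shuffles (x :: xs) ys).bind (fun s => shuffles (y :: s) zs))).map (z :: ·) := by
                rw [e1, e2, Multiset.map_add]; abel
            _ = ((shuffles ys (z :: zs)).bind (fun s => shuffles xs (y :: s))
                  + (shuffles (y :: ys) zs).bind (fun s => shuffles xs (z :: s))).map (x :: ·)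
                + ((shuffles ys (z :: zs)).bind (fun s => shuffles (x :: xs) s)).map (y :: ·)
                + ((shuffles (y :: ys) zs).bind (fun s => shuffles (x :: xs) s)).map (z :: ·) := by
                rw [e3', e0']
            _ = (shuffles (y :: ys) (z :: zs)).bind (fun s => shuffles (x :: xs) s) := by
                rw [Multiset.map_add]
                rw [shuffles_cons_cons y z, Multiset.add_bind, Multiset.bind_map,
                  Multiset.bind_map]
                rw [Multiset.bind_congr (fun s _ => shuffles_cons_cons x y xs s),
                  Multiset.bind_congr (fun s _ => shuffles_cons_cons x z xs s),
                  Multiset.bind_add, Multiset.bind_add]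
                simp only [← Multiset.map_bind]
                abel

end Part1
section Part2
variable {α : Type*}

/-- iterated shuffle multiset of a list of words -/
def MS : List (List α) → Multiset (List α)
  | [] => {[]}
  | w :: ws => (MS ws).bind fun u => shuffles w u

/-- multiset-level right half-shuffle of a multiset with a word -/
def hsm (m : Multiset (List α)) (u : List α) : Multiset (List α) :=
  m.bind fun t => (shuffles t u.dropLast).map (· ++ u.drop (u.length - 1))

lemma hsm_concat (m : Multiset (List α)) (v : List α) (a : α) :
    hsm m (v ++ [a]) = m.bind fun t => (shuffles t v).map (· ++ [a]) := by
  have h1 : (v ++ [a]).dropLast = v := List.dropLast_concat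
  have h2 : (v ++ [a]).drop ((v ++ [a]).length - 1) = [a] := by
    have : (v ++ [a]).length - 1 = v.length := by simp
    rw [this, List.drop_left]
  rw [hsm, h1, h2]

lemma swap_bind (a b : List α) (m : Multiset (List α)) :
    ((m.bind fun u => shuffles b u).bind fun u => shuffles a u)
      = ((m.bind fun u => shuffles a u).bind fun u => shuffles b u) := by
  rw [Multiset.bind_assoc, Multiset.bind_assoc]
  apply Multiset.bind_congr; intro t _
  calc (shuffles b t).bind (fun s => shuffles a s)
      = (shuffles b t).bind (fun s => shuffles s a) :=
        Multiset.bind_congr (fun s _ => shuffles_comm a s)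
    _ = (shuffles t a).bind (fun s => shuffles b s) := shuffles_assoc b t a
    _ = (shuffles a t).bind (fun s => shuffles b s) := by rw [shuffles_comm t a]

lemma MS_perm : ∀ {l l' : List (List α)}, l.Perm l' → MS l = MS l' := by
  intro l l' h
  induction h with
  | nil => rfl
  | cons x _ ih => simp only [MS, ih]
  | swap x y l => exact swap_bind y x (MS l)
  | trans _ _ ih1 ih2 => exact ih1.trans ih2

lemma finsetSum_bind {β : Type*} (s : Finset β) (f : β → Multiset (List α))
    (g : List α → Multiset (List α)) :
    (∑ j ∈ s, f j).bind g = ∑ j ∈ s, (f j).bind g := by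
  classical
  induction s using Finset.induction with
  | empty => simp
  | insert _ _ h ih => rw [Finset.sum_insert h, Finset.sum_insert h, Multiset.add_bind, ih]

lemma hsm_sum {β : Type*} (s : Finset β) (f : β → Multiset (List α)) (u : List α) :
    hsm (∑ j ∈ s, f j) u = ∑ j ∈ s, hsm (f j) u := finsetSum_bind s f _

/-- The exchange identity. -/
lemma exch (M : Multiset (List α)) (v w' : List α) (a b : α) :
    (hsm M (v ++ [a])).bind (fun t => shuffles (w' ++ [b]) t)
      = hsm (hsm M (v ++ [a])) (w' ++ [b])
        + hsm (M.bind fun t => shuffles (w' ++ [b]) t) (v ++ [a]) := by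
  have target2 : hsm (hsm M (v ++ [a])) (w' ++ [b])
      = M.bind fun t => (shuffles t v).bind fun s => (shuffles w' (s ++ [a])).map (· ++ [b]) := by
    rw [hsm_concat, hsm_concat, Multiset.bind_assoc]
    apply Multiset.bind_congr; intro t _
    rw [Multiset.bind_map]
    apply Multiset.bind_congr; intro s _
    rw [shuffles_comm]
  have target3 : hsm (M.bind fun t => shuffles (w' ++ [b]) t) (v ++ [a])
      = M.bind fun t => (shuffles t v).bind fun s => (shuffles (w' ++ [b]) s).map (· ++ [a]) := by
    rw [hsm_concat, Multiset.bind_assoc]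
    apply Multiset.bind_congr; intro t _
    have h1 : (shuffles t v).bind (fun s => (shuffles (w' ++ [b]) s).map (· ++ [a]))
        = ((shuffles t v).bind fun s => shuffles (w' ++ [b]) s).map (· ++ [a]) :=
      (Multiset.map_bind _ _ _).symm
    have h2 : ((shuffles (w' ++ [b]) t).bind fun s => (shuffles s v).map (· ++ [a]))
        = ((shuffles (w' ++ [b]) t).bind fun s => shuffles s v).map (· ++ [a]) :=
      (Multiset.map_bind _ _ _).symm
    rw [h1, h2, shuffles_assoc]
  rw [target2, target3, ← Multiset.bind_add]
  rw [hsm_concat, Multiset.bind_assoc]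
  apply Multiset.bind_congr; intro t _
  rw [Multiset.bind_map, ← Multiset.bind_add]
  apply Multiset.bind_congr; intro s _
  exact shuffles_concat_concat w' s b a

/-- THE KEY identity: peeling off the last letter of each word. -/
lemma keyl : ∀ (ws : List (List α)), (∀ u ∈ ws, u ≠ []) → ws ≠ [] →
    MS ws = ∑ j ∈ Finset.range ws.length, hsm (MS (ws.eraseIdx j)) (ws.getD j []) := by
  intro ws
  induction ws with
  | nil => intro _ h; exact absurd rfl h
  | cons w rest ih =>
    intro hne _
    have hw : w ≠ [] := hne w (by simp)
    obtain ⟨w', b, rfl⟩ : ∃ w' b, w = w' ++ [b] := by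
      rcases List.eq_nil_or_concat w with h | ⟨w', b, h⟩
      · exact absurd h hw
      · exact ⟨w', b, by simpa using h⟩
    rcases List.eq_nil_or_concat' rest with rfl | hrest
    · -- base case : a single word
      have hl : ([w' ++ [b]] : List (List α)).length = 1 := rfl
      rw [hl, Finset.sum_range_one]
      have h0 : ([w' ++ [b]] : List (List α)).eraseIdx 0 = [] := rfl
      have h1 : ([w' ++ [b]] : List (List α)).getD 0 [] = w' ++ [b] := rfl
      rw [h0, h1, hsm_concat]
      show (MS []).bind (fun u => shuffles (w' ++ [b]) u) = _
      simp only [MS, Multiset.singleton_bind, shuffles_nil_right, shuffles_nil_left,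
        Multiset.map_singleton]
    · -- inductive step
      have hrne : rest ≠ [] := by
        rcases hrest with ⟨r, a, rfl⟩; simp
      have hrne' : ∀ u ∈ rest, u ≠ [] := fun u hu => hne u (by simp [hu])
      have hgd : ∀ j, j < rest.length → rest.getD j [] ≠ [] := by
        intro j hj
        rw [List.getD_eq_getElem _ _ hj]
        exact hrne' _ (List.getElem_mem hj)
      calc MS ((w' ++ [b]) :: rest)
          = (∑ j ∈ Finset.range rest.length,
              hsm (MS (rest.eraseIdx j)) (rest.getD j [])).bind
                (fun t => shuffles (w' ++ [b]) t) := by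
            show (MS rest).bind (fun u => shuffles (w' ++ [b]) u) = _
            rw [ih hrne' hrne]
        _ = ∑ j ∈ Finset.range rest.length,
              (hsm (MS (rest.eraseIdx j)) (rest.getD j [])).bind
                (fun t => shuffles (w' ++ [b]) t) := finsetSum_bind _ _ _
        _ = ∑ j ∈ Finset.range rest.length,
              (hsm (hsm (MS (rest.eraseIdx j)) (rest.getD j [])) (w' ++ [b])
               + hsm ((MS (rest.eraseIdx j)).bind fun t => shuffles (w' ++ [b]) t)
                   (rest.getD j [])) := by
            apply Finset.sum_congr rfl
            intro j hj
            rw [Finset.mem_range] at hj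
            obtain ⟨v, a, hva⟩ : ∃ v a, rest.getD j [] = v ++ [a] := by
              rcases List.eq_nil_or_concat (rest.getD j []) with h | ⟨v, a, h⟩
              · exact absurd h (hgd j hj)
              · exact ⟨v, a, by simpa using h⟩
            rw [hva]
            exact exch _ _ _ _ _
        _ = hsm (∑ j ∈ Finset.range rest.length,
                hsm (MS (rest.eraseIdx j)) (rest.getD j [])) (w' ++ [b])
            + ∑ j ∈ Finset.range rest.length,
                hsm (MS ((w' ++ [b]) :: rest.eraseIdx j)) (rest.getD j []) := by
            rw [Finset.sum_add_distrib, hsm_sum]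
            rfl
        _ = ∑ j ∈ Finset.range rest.length,
              hsm (MS (((w' ++ [b]) :: rest).eraseIdx (j + 1)))
                (((w' ++ [b]) :: rest).getD (j + 1) [])
            + hsm (MS (((w' ++ [b]) :: rest).eraseIdx 0)) (((w' ++ [b]) :: rest).getD 0 []) := by
            rw [← ih hrne' hrne]
            simp only [List.eraseIdx_cons_succ, List.getD_cons_succ, List.eraseIdx_cons_zero,
              List.getD_cons_zero]
            exact add_comm _ _
        _ = ∑ j ∈ Finset.range ((w' ++ [b]) :: rest).length,
              hsm (MS (((w' ++ [b]) :: rest).eraseIdx j)) (((w' ++ [b]) :: rest).getD j []) := by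
            rw [List.length_cons, Finset.sum_range_succ']

end Part2
section Part3
variable {α : Type*}

lemma ofMS_add (m n : Multiset (List α)) : ofMS (m + n) = ofMS m + ofMS n := by
  simp [ofMS]

lemma ofMS_singleton (l : List α) : ofMS ({l} : Multiset (List α)) = Finsupp.single l 1 := by
  simp [ofMS]

lemma ofMS_bind {β : Type*} (m : Multiset β) (f : β → Multiset (List α)) :
    ofMS (m.bind f) = (m.map (fun v => ofMS (f v))).sum := by
  rw [ofMS, Multiset.map_bind, Multiset.sum_bind]
  rfl

lemma ofMS_sum {β : Type*} (s : Finset β) (f : β → Multiset (List α)) :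
    ofMS (∑ j ∈ s, f j) = ∑ j ∈ s, ofMS (f j) := by
  classical
  induction s using Finset.induction with
  | empty => simp [ofMS]
  | insert _ _ h ih => rw [Finset.sum_insert h, Finset.sum_insert h, ofMS_add, ih]

lemma sum_ofMS {M : Type*} [AddCommMonoid M] [Module ℝ M] (m : Multiset (List α))
    (g : List α → M) :
    (ofMS m).sum (fun u b => b • g u) = (m.map g).sum := by
  induction m using Multiset.induction with
  | empty => simp [ofMS]
  | cons a m ih =>
      have h1 : ofMS (a ::ₘ m) = Finsupp.single a 1 + ofMS m := by
        simp [ofMS]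
      rw [h1, Finsupp.sum_add_index' (fun u => by simp)
        (fun u b1 b2 => add_smul b1 b2 (g u)),
        Finsupp.sum_single_index (by simp), ih]
      simp

lemma sh_eq (x y : List α →₀ ℝ) :
    sh x y = x.sum fun v a => a • y.sum fun w b => b • ofMS (shuffles v w) := by
  unfold sh
  apply Finsupp.sum_congr; intro v _
  rw [Finsupp.smul_sum]
  apply Finsupp.sum_congr; intro w _
  rw [mul_smul]

lemma sh_ofMS_ofMS (m n : Multiset (List α)) :
    sh (ofMS m) (ofMS n) = ofMS (m.bind fun u => n.bind fun v => shuffles u v) := by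
  rw [sh_eq, sum_ofMS m (fun v => (ofMS n).sum fun w b => b • ofMS (shuffles v w)),
    ofMS_bind]
  congr 1
  apply Multiset.map_congr rfl
  intro v _
  rw [sum_ofMS n (fun w => ofMS (shuffles v w)), ofMS_bind]

lemma sh_single_ofMS (u : List α) (n : Multiset (List α)) :
    sh (Finsupp.single u 1) (ofMS n) = ofMS (n.bind fun v => shuffles u v) := by
  rw [← ofMS_singleton, sh_ofMS_ofMS, Multiset.singleton_bind]

lemma shProd_singles : ∀ ws : List (List α),
    shProd (ws.map fun u => Finsupp.single u (1:ℝ)) = ofMS (MS ws) := by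
  intro ws
  induction ws with
  | nil =>
      show Finsupp.single [] 1 = ofMS {[]}
      rw [ofMS_singleton]
  | cons w ws ih =>
      rw [List.map_cons]
      show sh (Finsupp.single w 1) (shProd (ws.map fun u => Finsupp.single u (1:ℝ))) = _
      rw [ih, sh_single_ofMS]
      rfl

lemma hsW_concat (u v : List α) (a : α) :
    hsW u (v ++ [a]) = ofMS ((shuffles u v).map (· ++ [a])) := by
  rw [hsW, dif_neg (by simp)]
  have h1 : (v ++ [a]).dropLast = v := List.dropLast_concat
  rw [h1]
  exact congrArg ofMS (Multiset.map_congr rfl (fun l _ => by simp))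

lemma hs_eq (x y : List α →₀ ℝ) :
    hs x y = x.sum fun v a => a • y.sum fun w b => b • hsW v w := by
  unfold hs
  apply Finsupp.sum_congr; intro v _
  rw [Finsupp.smul_sum]
  apply Finsupp.sum_congr; intro w _
  rw [mul_smul]

lemma hs_ofMS_single (m : Multiset (List α)) (v : List α) (a : α) :
    hs (ofMS m) (Finsupp.single (v ++ [a]) 1) = ofMS (hsm m (v ++ [a])) := by
  rw [hs_eq, sum_ofMS m (fun t => (Finsupp.single (v ++ [a]) (1:ℝ)).sum fun w b => b • hsW t w),
    hsm_concat, ofMS_bind]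
  congr 1
  apply Multiset.map_congr rfl
  intro t _
  rw [Finsupp.sum_single_index (by simp), one_smul, hsW_concat]

lemma hs_zero_left (y : List α →₀ ℝ) : hs 0 y = 0 := by
  unfold hs
  exact Finsupp.sum_zero_index

lemma hs_add_left (x x' y : List α →₀ ℝ) : hs (x + x') y = hs x y + hs x' y := by
  unfold hs
  apply Finsupp.sum_add_index'
  · intro v
    simp only [zero_mul, zero_smul]
    exact Finset.sum_const_zero
  · intro v b1 b2
    simp only [add_mul, add_smul]
    exact Finsupp.sum_add

lemma hs_sum_left {β : Type*} (s : Finset β) (f : β → (List α →₀ ℝ)) (y : List α →₀ ℝ) :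
    hs (∑ j ∈ s, f j) y = ∑ j ∈ s, hs (f j) y := by
  classical
  induction s using Finset.induction with
  | empty => simpa using hs_zero_left y
  | insert _ _ h ih => rw [Finset.sum_insert h, Finset.sum_insert h, hs_add_left, ih]

lemma hsList_singleton (u : List α) : hsList [u] = Finsupp.single u 1 := rfl

lemma hsList_concat (w u : List α) (ws : List (List α)) :
    hsList (w :: ws ++ [u]) = hs (hsList (w :: ws)) (Finsupp.single u 1) := by
  show (ws ++ [u]).foldl (fun acc x => hs acc (Finsupp.single x 1)) (Finsupp.single w 1) = _
  rw [List.foldl_append]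
  rfl

end Part3
section Part4
variable {α : Type*}

lemma map_finRange_rotate {β : Type*} (n : ℕ) (v : Fin (n+2) → β) :
    (List.finRange (n+2)).map (fun i => v (finRotate (n+2) i)) =
      ((List.finRange (n+1)).map (fun i => v i.succ)) ++ [v 0] := by
  apply List.ext_getElem
  · simp
  intro j h1 h2
  rw [List.getElem_map, List.getElem_finRange, List.getElem_append]
  simp only [List.length_map, List.length_finRange] at h1 h2 ⊢
  split_ifs with hj
  · rw [List.getElem_map, List.getElem_finRange]
    congr 1
    rw [finRotate_succ_apply]
    apply Fin.ext
    simp [Fin.add_def]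
    omega
  · have hj2 : j = n + 1 := by omega
    subst hj2
    simp only [Nat.sub_self, List.getElem_singleton]
    congr 1
    rw [finRotate_succ_apply]
    apply Fin.ext
    simp [Fin.add_def]

lemma map_perm_finRange_perm (m : ℕ) (σ : Equiv.Perm (Fin m)) :
    ((List.finRange m).map σ).Perm (List.finRange m) := by
  apply List.perm_of_nodup_nodup_toFinset_eq
  · exact (List.nodup_finRange m).map σ.injective
  · exact List.nodup_finRange m
  · ext x
    simp only [List.mem_toFinset, List.mem_map, List.mem_finRange, true_and, iff_true]
    exact ⟨σ⁻¹ x, by simp⟩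

lemma perm_getElem_cons_eraseIdx {β : Type*} (l : List β) (j : ℕ) (h : j < l.length) :
    l.Perm (l[j] :: l.eraseIdx j) := by
  have hl : l = List.take j l ++ l[j] :: List.drop (j+1) l := by
    rw [List.getElem_cons_drop, List.take_append_drop]
  rw [List.eraseIdx_eq_take_drop_succ]
  conv_lhs => rw [hl]
  exact List.perm_middle

lemma cons_swap_perm {β : Type*} (n : ℕ) (w : Fin (n+2) → β) (p : Fin (n+2)) :
    (w p :: (List.finRange (n+1)).map (fun i => w (Equiv.swap 0 p i.succ))).Perm
      ((List.finRange (n+2)).map w) := by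
  have h1 : w p :: (List.finRange (n+1)).map (fun i => w (Equiv.swap 0 p i.succ))
      = ((List.finRange (n+2)).map (Equiv.swap 0 p)).map w := by
    conv_rhs => rw [List.finRange_succ]
    rw [List.map_cons, List.map_cons, List.map_map, List.map_map]
    congr 1
  rw [h1]
  exact (map_perm_finRange_perm _ _).map w

lemma hsList_append_single (l : List (List α)) (hl : l ≠ []) (u : List α) :
    hsList (l ++ [u]) = hs (hsList l) (Finsupp.single u 1) := by
  cases l with
  | nil => exact absurd rfl hl
  | cons w ws => exact hsList_concat w u ws

theorem main_aux : ∀ (n : ℕ) (w : Fin (n+1) → List α), (∀ i, w i ≠ []) →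
    shProd ((List.finRange (n+1)).map fun i => Finsupp.single (w i) (1:ℝ)) =
      ∑ σ : Equiv.Perm (Fin (n+1)), hsList ((List.finRange (n+1)).map fun i => w (σ i)) := by
  intro n
  induction n with
  | zero =>
      intro w hw
      haveI : Subsingleton (Equiv.Perm (Fin 1)) :=
        ⟨fun a b => Equiv.ext fun x => Subsingleton.elim _ _⟩
      rw [Fintype.sum_subsingleton _ (1 : Equiv.Perm (Fin 1))]
      have hfr : List.finRange 1 = [(0 : Fin 1)] := rfl
      rw [hfr]
      simp only [List.map_cons, List.map_nil, Equiv.Perm.coe_one, id_eq, hsList_singleton]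
      show sh (Finsupp.single (w 0) 1) (Finsupp.single ([] : List α) 1) = _
      rw [← ofMS_singleton ([] : List α), sh_single_ofMS, Multiset.singleton_bind,
        shuffles_nil_right, ofMS_singleton]
  | succ n IH =>
      intro w hw
      -- notation
      set wsAll : List (List α) := (List.finRange (n+2)).map w with hwsAll
      have hlen : wsAll.length = n + 2 := by simp [hwsAll]
      have hMSp : ∀ p : Fin (n+2),
          MS ((List.finRange (n+1)).map (fun i => w (Equiv.swap 0 p i.succ)))
            = MS (wsAll.eraseIdx (p : ℕ)) := by
        intro p
        apply MS_perm
        have h3 : wsAll[(p : ℕ)]'(by omega) = w p := by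
          simp [hwsAll, List.getElem_finRange]
        have h4 := perm_getElem_cons_eraseIdx wsAll (p : ℕ) (by omega)
        rw [h3] at h4
        exact List.Perm.cons_inv ((cons_swap_perm n w p).trans h4)
      -- chain of sum computations
      symm
      calc ∑ σ : Equiv.Perm (Fin (n+2)),
              hsList ((List.finRange (n+2)).map fun i => w (σ i))
          = ∑ π : Equiv.Perm (Fin (n+2)),
              hsList (((List.finRange (n+1)).map fun i => w (π i.succ)) ++ [w (π 0)]) := by
            rw [← Equiv.sum_comp (Equiv.mulRight (finRotate (n+2)))
              (fun σ => hsList ((List.finRange (n+2)).map fun i => w (σ i)))]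
            apply Finset.sum_congr rfl
            intro π _
            congr 1
            have h5 := map_finRange_rotate n (fun j => w (π j))
            simpa [Equiv.Perm.mul_apply] using h5
        _ = ∑ π : Equiv.Perm (Fin (n+2)),
              hs (hsList ((List.finRange (n+1)).map fun i => w (π i.succ)))
                (Finsupp.single (w (π 0)) 1) := by
            apply Finset.sum_congr rfl
            intro π _
            exact hsList_append_single _ (by simp [List.finRange_succ]) _
        _ = ∑ p : Fin (n+2), ∑ e : Equiv.Perm (Fin (n+1)),
              hs (hsList ((List.finRange (n+1)).map fun i =>
                  w (Equiv.swap 0 p (e i).succ)))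
                (Finsupp.single (w p) 1) := by
            rw [← Equiv.sum_comp Equiv.Perm.decomposeFin.symm
              (fun π => hs (hsList ((List.finRange (n+1)).map fun i => w (π i.succ)))
                (Finsupp.single (w (π 0)) 1)), Fintype.sum_prod_type]
            apply Finset.sum_congr rfl; intro p _
            apply Finset.sum_congr rfl; intro e _
            simp only [Equiv.Perm.decomposeFin_symm_apply_zero,
              Equiv.Perm.decomposeFin_symm_apply_succ]
        _ = ∑ p : Fin (n+2),
              hs (shProd ((List.finRange (n+1)).map fun i =>
                  Finsupp.single (w (Equiv.swap 0 p i.succ)) (1:ℝ)))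
                (Finsupp.single (w p) 1) := by
            apply Finset.sum_congr rfl; intro p _
            rw [← hs_sum_left, ← IH (fun i => w (Equiv.swap 0 p i.succ)) (fun i => hw _)]
        _ = ∑ p : Fin (n+2), ofMS (hsm (MS (wsAll.eraseIdx (p : ℕ))) (w p)) := by
            apply Finset.sum_congr rfl; intro p _
            have h6 : ((List.finRange (n+1)).map fun i =>
                Finsupp.single (w (Equiv.swap 0 p i.succ)) (1:ℝ))
                = ((List.finRange (n+1)).map fun i => w (Equiv.swap 0 p i.succ)).map
                    (fun u => Finsupp.single u (1:ℝ)) := by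
              rw [List.map_map]; rfl
            rw [h6, shProd_singles, hMSp p]
            obtain ⟨v, a, hva⟩ : ∃ v a, w p = v ++ [a] := by
              rcases List.eq_nil_or_concat (w p) with h | ⟨v, a, h⟩
              · exact absurd h (hw p)
              · exact ⟨v, a, by simpa using h⟩
            rw [hva, hs_ofMS_single]
        _ = ofMS (∑ j ∈ Finset.range (n+2),
              hsm (MS (wsAll.eraseIdx j)) (wsAll.getD j [])) := by
            rw [ofMS_sum]
            rw [← Fin.sum_univ_eq_sum_range
              (fun j => ofMS (hsm (MS (wsAll.eraseIdx j)) (wsAll.getD j [])))]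
            apply Finset.sum_congr rfl; intro p _
            congr 2
            rw [List.getD_eq_getElem _ _ (by omega)]
            simp [hwsAll, List.getElem_finRange]
        _ = ofMS (MS wsAll) := by
            rw [← hlen, ← keyl wsAll
              (by
                intro u hu
                rw [hwsAll, List.mem_map] at hu
                obtain ⟨i, _, rfl⟩ := hu
                exact hw i)
              (by
                rw [hwsAll]
                simp [List.finRange_succ])]
        _ = shProd ((List.finRange (n+2)).map fun i => Finsupp.single (w i) (1:ℝ)) := by
            rw [← shProd_singles]
            congr 1
            rw [hwsAll, List.map_map]
            rfl

end Part4
/-- the shuffle product of `k` non-empty words is the sum over all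
permutations of the left-bracketed iterated right half-shuffles. -/
theorem shuffle_eq_sum_halfShuffles (d k : ℕ) (hd : 1 ≤ d) (hk : 1 ≤ k)
    (w : Fin k → List (Fin d)) (hw : ∀ i, w i ≠ []) :
    shProd ((List.finRange k).map fun i => Finsupp.single (w i) (1 : ℝ)) =
      ∑ σ : Equiv.Perm (Fin k),
        hsList ((List.finRange k).map fun i => w (σ i)) := by
  obtain ⟨n, rfl⟩ : ∃ n, k = n + 1 := ⟨k - 1, by omega⟩
  exact main_aux n w hw

end ShufflePaper
end

section
/- Let d ≥ 1, let V_d be the ℝ-linear span of the S_{2d}-orbit {σ · inv(t_{2,d}) : σ ∈ S_{2d}} inside the span of words of length 2d in the alphabet {1,…,d}, and let H be the subgroup of S_{2d} generated by the transpositions (2i−1, 2i+1) and (2i, 2i+2) for 1 ≤ i ≤ d−1. Then the subspace { x ∈ V_d : h·x = sign(h)·x for all h ∈ H } is one-dimensional. -/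
open scoped BigOperators

namespace ShufflePaper

variable {α : Type*}

/-- word map induced by a position permutation -/
def Fmap {d : ℕ} (n : ℕ) (σ : Equiv.Perm (Fin n)) (w : List (Fin d)) : List (Fin d) :=
  if h : w.length = n then List.ofFn fun p : Fin n => w.get (Fin.cast h.symm (σ⁻¹ p)) else w

lemma length_Fmap {d n : ℕ} (σ : Equiv.Perm (Fin n)) (w : List (Fin d)) :
    (Fmap n σ w).length = w.length := by
  unfold Fmap; split
  · simp [List.length_ofFn, *]
  · rfl

lemma Fmap_of_length {d n : ℕ} (σ : Equiv.Perm (Fin n)) (w : List (Fin d)) (h : w.length = n) :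
    Fmap n σ w = List.ofFn fun p : Fin n => w.get (Fin.cast h.symm (σ⁻¹ p)) := dif_pos h

lemma getElem_Fmap {d n : ℕ} (σ : Equiv.Perm (Fin n)) (w : List (Fin d)) (h : w.length = n)
    (k : ℕ) (hk : k < n) :
    (Fmap n σ w)[k]'(by rw [length_Fmap, h]; exact hk)
      = w[((σ⁻¹ ⟨k, hk⟩ : Fin n) : ℕ)]'(by rw [h]; exact (σ⁻¹ ⟨k, hk⟩).isLt) := by
  rw [List.getElem_of_eq (Fmap_of_length σ w h), List.getElem_ofFn]
  rfl

lemma Fmap_Fmap {d n : ℕ} (σ τ : Equiv.Perm (Fin n)) (w : List (Fin d)) :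
    Fmap n σ (Fmap n τ w) = Fmap n (σ * τ) w := by
  by_cases h : w.length = n
  · have h2 : (Fmap n τ w).length = n := by rw [length_Fmap, h]
    apply List.ext_getElem
    · simp [length_Fmap]
    · intro k h1 h1'
      have hk : k < n := by rwa [length_Fmap, h2] at h1
      rw [getElem_Fmap σ _ h2 k hk, getElem_Fmap (σ * τ) w h k hk, getElem_Fmap τ w h]
      congr 2
      exact (σ⁻¹ ⟨k, hk⟩).isLt
  · unfold Fmap
    rw [dif_neg h, dif_neg h, dif_neg h]

lemma Fmap_one {d n : ℕ} (w : List (Fin d)) : Fmap n (1 : Equiv.Perm (Fin n)) w = w := by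
  by_cases h : w.length = n
  · apply List.ext_getElem
    · simp [length_Fmap]
    · intro k h1 h2
      have hk : k < n := by rwa [length_Fmap, h] at h1
      rw [getElem_Fmap 1 w h k hk]
      rfl
  · exact dif_neg h

lemma Fmap_injective {d n : ℕ} (σ : Equiv.Perm (Fin n)) :
    Function.Injective (Fmap (d := d) n σ) := by
  intro u v huv
  have := congrArg (Fmap n σ⁻¹) huv
  rwa [Fmap_Fmap, Fmap_Fmap, inv_mul_cancel, Fmap_one, Fmap_one] at this

/-- permAct is mapDomain along Fmap -/
lemma permAct_eq_mapDomain {d : ℕ} (n : ℕ) (σ : Equiv.Perm (Fin n)) (x : List (Fin d) →₀ ℝ) :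
    permAct n σ x = Finsupp.mapDomain (Fmap n σ) x := by
  rw [Finsupp.mapDomain, permAct]
  apply Finsupp.sum_congr
  intro w _
  unfold Fmap
  split <;> rfl

lemma permAct_apply_Fmap {d : ℕ} (n : ℕ) (σ : Equiv.Perm (Fin n)) (x : List (Fin d) →₀ ℝ)
    (w : List (Fin d)) : (permAct n σ x) (Fmap n σ w) = x w := by
  rw [permAct_eq_mapDomain, Finsupp.mapDomain_apply (Fmap_injective σ)]

lemma permAct_one {d : ℕ} (n : ℕ) (x : List (Fin d) →₀ ℝ) : permAct n 1 x = x := by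
  rw [permAct_eq_mapDomain]
  have : Fmap (d := d) n 1 = id := funext fun w => Fmap_one w
  rw [this, Finsupp.mapDomain_id]

lemma permAct_mul {d : ℕ} (n : ℕ) (σ τ : Equiv.Perm (Fin n)) (x : List (Fin d) →₀ ℝ) :
    permAct n (σ * τ) x = permAct n σ (permAct n τ x) := by
  simp only [permAct_eq_mapDomain]
  rw [← Finsupp.mapDomain_comp]
  congr 1
  funext w
  exact (Fmap_Fmap σ τ w).symm

lemma permAct_smul {d : ℕ} (n : ℕ) (σ : Equiv.Perm (Fin n)) (c : ℝ) (x : List (Fin d) →₀ ℝ) :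
    permAct n σ (c • x) = c • permAct n σ x := by
  simp only [permAct_eq_mapDomain]; exact Finsupp.mapDomain_smul c x

lemma permAct_zsmul {d : ℕ} (n : ℕ) (σ : Equiv.Perm (Fin n)) (c : ℤ) (x : List (Fin d) →₀ ℝ) :
    permAct n σ (c • x) = c • permAct n σ x := by
  rw [← Int.cast_smul_eq_zsmul ℝ, ← Int.cast_smul_eq_zsmul ℝ c (permAct n σ x), permAct_smul]

lemma permAct_add {d : ℕ} (n : ℕ) (σ : Equiv.Perm (Fin n)) (x y : List (Fin d) →₀ ℝ) :
    permAct n σ (x + y) = permAct n σ x + permAct n σ y := by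
  simp only [permAct_eq_mapDomain]; exact Finsupp.mapDomain_add

lemma permAct_sum {d : ℕ} (n : ℕ) (σ : Equiv.Perm (Fin n)) {ι : Type*} (s : Finset ι)
    (f : ι → (List (Fin d) →₀ ℝ)) :
    permAct n σ (∑ i ∈ s, f i) = ∑ i ∈ s, permAct n σ (f i) := by
  simp only [permAct_eq_mapDomain]; exact Finsupp.mapDomain_finset_sum

lemma permAct_single {d : ℕ} (n : ℕ) (σ : Equiv.Perm (Fin n)) (w : List (Fin d)) (c : ℝ) :
    permAct n σ (Finsupp.single w c) = Finsupp.single (Fmap n σ w) c := by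
  rw [permAct_eq_mapDomain, Finsupp.mapDomain_single]



lemma length_flatMapPairs {ι β : Type*} (l : List ι) (f g : ι → β) :
    (l.flatMap fun i => [f i, g i]).length = 2 * l.length := by
  induction l with
  | nil => rfl
  | cons a t ih => simp only [List.flatMap_cons, List.length_append, ih, List.length_cons,
      List.length_nil]; omega

lemma getElem_flatMapPairs {ι β : Type*} (l : List ι) (f g : ι → β) (k : ℕ)
    (hk : k < 2 * l.length) (hk2 : k / 2 < l.length) :
    (l.flatMap fun i => [f i, g i])[k]'(by rw [length_flatMapPairs]; exact hk)
      = if k % 2 = 0 then f (l[k / 2]'hk2) else g (l[k / 2]'hk2) := by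
  induction l generalizing k with
  | nil => simp at hk
  | cons a t ih =>
    match k with
    | 0 => rfl
    | 1 => rfl
    | (k + 2) =>
      have hk' : k < 2 * t.length := by simp at hk; omega
      have hk2' : k / 2 < t.length := by simp at hk2; omega
      have e1 : (k + 2) % 2 = k % 2 := by omega
      have e2 : (k + 2) / 2 = k / 2 + 1 := by omega
      have lhs : ((a :: t).flatMap fun i => [f i, g i])[k + 2]'(by
          rw [length_flatMapPairs]; exact hk)
          = (t.flatMap fun i => [f i, g i])[k]'(by rw [length_flatMapPairs]; exact hk') := by
        simp [List.flatMap_cons]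
      rw [lhs, ih k hk' hk2']
      simp only [e1]
      congr 1 <;> · rw [List.getElem_cons]
                    simp [e2]

/-- the word σ(1)τ(1)⋯σ(d)τ(d) -/
def wordOf {d : ℕ} (σ τ : Equiv.Perm (Fin d)) : List (Fin d) :=
  (List.finRange d).flatMap fun i => [σ i, τ i]

lemma length_wordOf {d : ℕ} (σ τ : Equiv.Perm (Fin d)) : (wordOf σ τ).length = 2 * d := by
  rw [show wordOf σ τ = (List.finRange d).flatMap fun i => [σ i, τ i] from rfl,
    length_flatMapPairs, List.length_finRange]

lemma getElem_wordOf {d : ℕ} (σ τ : Equiv.Perm (Fin d)) (k : ℕ) (hk : k < 2 * d) :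
    (wordOf σ τ)[k]'(by rw [length_wordOf]; exact hk)
      = if k % 2 = 0 then σ ⟨k / 2, by omega⟩ else τ ⟨k / 2, by omega⟩ := by
  have hk2 : k / 2 < (List.finRange d).length := by rw [List.length_finRange]; omega
  rw [List.getElem_of_eq (show wordOf σ τ = (List.finRange d).flatMap fun i => [σ i, τ i]
    from rfl)]
  rw [getElem_flatMapPairs (List.finRange d) σ τ k (by rw [List.length_finRange]; exact hk) hk2]
  rw [List.getElem_finRange]
  rfl

lemma wordOf_inj {d : ℕ} {σ τ σ' τ' : Equiv.Perm (Fin d)}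
    (h : wordOf σ τ = wordOf σ' τ') : σ = σ' ∧ τ = τ' := by
  have hv : ∀ k (hk : k < 2 * d),
      (wordOf σ τ)[k]'(by rw [length_wordOf]; exact hk)
        = (wordOf σ' τ')[k]'(by rw [length_wordOf]; exact hk) :=
    fun k hk => List.getElem_of_eq h _
  constructor
  · ext j
    have h2j : 2 * (j : ℕ) < 2 * d := by have := j.isLt; omega
    have := hv (2 * (j : ℕ)) h2j
    rw [getElem_wordOf σ τ _ h2j, getElem_wordOf σ' τ' _ h2j] at this
    have e : (2 * (j : ℕ)) % 2 = 0 := by omega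
    have e2 : (2 * (j : ℕ)) / 2 = (j : ℕ) := by omega
    simp only [e, if_pos rfl] at this
    have := congrArg Fin.val this
    simpa [e2] using this
  · ext j
    have h2j : 2 * (j : ℕ) + 1 < 2 * d := by have := j.isLt; omega
    have := hv (2 * (j : ℕ) + 1) h2j
    rw [getElem_wordOf σ τ _ h2j, getElem_wordOf σ' τ' _ h2j] at this
    simp only [if_neg (by omega : ¬ (2 * (j:ℕ) + 1) % 2 = 0)] at this
    have := congrArg Fin.val this
    have e2 : (2 * (j : ℕ) + 1) / 2 = (j : ℕ) := by omega
    simpa [e2] using this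

lemma invT2_eq (d : ℕ) :
    invT2 d = ∑ σ : Equiv.Perm (Fin d), ∑ τ : Equiv.Perm (Fin d),
      ((Equiv.Perm.sign σ : ℤ) * (Equiv.Perm.sign τ : ℤ)) •
        Finsupp.single (wordOf σ τ) 1 := rfl

lemma val_swap_mk {n : ℕ} (a b k : ℕ) (ha : a < n) (hb : b < n) (hk : k < n) :
    ((Equiv.swap (⟨a, ha⟩ : Fin n) ⟨b, hb⟩) ⟨k, hk⟩ : ℕ)
      = if k = a then b else if k = b then a else k := by
  rw [Equiv.swap_apply_def]
  split_ifs with h1 h2 h3 h4 h5 h6 <;> simp_all [Fin.ext_iff]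

lemma entryVal {d : ℕ} (σ τ : Equiv.Perm (Fin d)) {m k : ℕ} (hm : m < 2 * d) (hk : k < 2 * d)
    (h : m = k) :
    (if m % 2 = 0 then σ ⟨m / 2, by omega⟩ else τ ⟨m / 2, by omega⟩)
      = (if k % 2 = 0 then σ ⟨k / 2, by omega⟩ else τ ⟨k / 2, by omega⟩) := by
  subst h; rfl

lemma Fmap_swap_even {d : ℕ} (σ τ : Equiv.Perm (Fin d)) (i j : Fin d) :
    Fmap (2 * d) (Equiv.swap ⟨2 * (i : ℕ), by have := i.isLt; omega⟩
        ⟨2 * (j : ℕ), by have := j.isLt; omega⟩) (wordOf σ τ)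
      = wordOf (σ * Equiv.swap i j) τ := by
  have hi : 2 * (i : ℕ) < 2 * d := by have := i.isLt; omega
  have hj : 2 * (j : ℕ) < 2 * d := by have := j.isLt; omega
  set s : Equiv.Perm (Fin (2 * d)) := Equiv.swap ⟨2 * (i : ℕ), hi⟩ ⟨2 * (j : ℕ), hj⟩ with hs
  apply List.ext_getElem
  · simp [length_Fmap, length_wordOf]
  · intro k h1 h2
    have hk : k < 2 * d := by rwa [length_wordOf] at h2
    rw [getElem_Fmap s (wordOf σ τ) (length_wordOf σ τ) k hk]
    have hsinv : s⁻¹ = s := by rw [hs, Equiv.swap_inv]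
    rw [hsinv]
    have hmlt : ((s ⟨k, hk⟩ : Fin (2 * d)) : ℕ) < 2 * d := (s ⟨k, hk⟩).isLt
    rw [getElem_wordOf σ τ _ hmlt, getElem_wordOf (σ * Equiv.swap i j) τ k hk]
    have hm : ((s ⟨k, hk⟩ : Fin (2 * d)) : ℕ)
        = if k = 2 * (i : ℕ) then 2 * (j : ℕ) else if k = 2 * (j : ℕ) then 2 * (i : ℕ) else k := by
      rw [hs]; exact val_swap_mk _ _ _ _ _ _
    by_cases hki : k = 2 * (i : ℕ)
    · have hm' : ((s ⟨k, hk⟩ : Fin (2 * d)) : ℕ) = 2 * (j : ℕ) := by rw [hm, if_pos hki]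
      rw [entryVal σ τ hmlt hj hm']
      rw [if_pos (by omega), if_pos (by omega : k % 2 = 0)]
      have ej : (⟨2 * (j : ℕ) / 2, by omega⟩ : Fin d) = j := Fin.ext (by simp <;> omega)
      have ei : (⟨k / 2, by omega⟩ : Fin d) = i := Fin.ext (by simp <;> omega)
      rw [ej, ei, Equiv.Perm.mul_apply, Equiv.swap_apply_left]
    · by_cases hkj : k = 2 * (j : ℕ)
      · have hm' : ((s ⟨k, hk⟩ : Fin (2 * d)) : ℕ) = 2 * (i : ℕ) := by
          rw [hm, if_neg hki, if_pos hkj]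
        rw [entryVal σ τ hmlt hi hm']
        rw [if_pos (by omega), if_pos (by omega : k % 2 = 0)]
        have ei : (⟨2 * (i : ℕ) / 2, by omega⟩ : Fin d) = i := Fin.ext (by simp <;> omega)
        have ej : (⟨k / 2, by omega⟩ : Fin d) = j := Fin.ext (by simp <;> omega)
        rw [ei, ej, Equiv.Perm.mul_apply, Equiv.swap_apply_right]
      · have hm' : ((s ⟨k, hk⟩ : Fin (2 * d)) : ℕ) = k := by rw [hm, if_neg hki, if_neg hkj]
        rw [entryVal σ τ hmlt hk hm']
        by_cases hke : k % 2 = 0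
        · rw [if_pos hke, if_pos hke, Equiv.Perm.mul_apply]
          congr 1
          refine (Equiv.swap_apply_of_ne_of_ne ?_ ?_).symm
          · exact fun h => hki (by have := congrArg Fin.val h; simp at this; omega)
          · exact fun h => hkj (by have := congrArg Fin.val h; simp at this; omega)
        · rw [if_neg hke, if_neg hke]

lemma Fmap_swap_odd {d : ℕ} (σ τ : Equiv.Perm (Fin d)) (i j : Fin d) :
    Fmap (2 * d) (Equiv.swap ⟨2 * (i : ℕ) + 1, by have := i.isLt; omega⟩
        ⟨2 * (j : ℕ) + 1, by have := j.isLt; omega⟩) (wordOf σ τ)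
      = wordOf σ (τ * Equiv.swap i j) := by
  have hi : 2 * (i : ℕ) + 1 < 2 * d := by have := i.isLt; omega
  have hj : 2 * (j : ℕ) + 1 < 2 * d := by have := j.isLt; omega
  set s : Equiv.Perm (Fin (2 * d)) :=
    Equiv.swap ⟨2 * (i : ℕ) + 1, hi⟩ ⟨2 * (j : ℕ) + 1, hj⟩ with hs
  apply List.ext_getElem
  · simp [length_Fmap, length_wordOf]
  · intro k h1 h2
    have hk : k < 2 * d := by rwa [length_wordOf] at h2
    rw [getElem_Fmap s (wordOf σ τ) (length_wordOf σ τ) k hk]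
    have hsinv : s⁻¹ = s := by rw [hs, Equiv.swap_inv]
    rw [hsinv]
    have hmlt : ((s ⟨k, hk⟩ : Fin (2 * d)) : ℕ) < 2 * d := (s ⟨k, hk⟩).isLt
    rw [getElem_wordOf σ τ _ hmlt, getElem_wordOf σ (τ * Equiv.swap i j) k hk]
    have hm : ((s ⟨k, hk⟩ : Fin (2 * d)) : ℕ)
        = if k = 2 * (i : ℕ) + 1 then 2 * (j : ℕ) + 1
          else if k = 2 * (j : ℕ) + 1 then 2 * (i : ℕ) + 1 else k := by
      rw [hs]; exact val_swap_mk _ _ _ _ _ _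
    by_cases hki : k = 2 * (i : ℕ) + 1
    · have hm' : ((s ⟨k, hk⟩ : Fin (2 * d)) : ℕ) = 2 * (j : ℕ) + 1 := by rw [hm, if_pos hki]
      rw [entryVal σ τ hmlt hj hm']
      rw [if_neg (by omega), if_neg (by omega : ¬ k % 2 = 0)]
      have ej : (⟨(2 * (j : ℕ) + 1) / 2, by omega⟩ : Fin d) = j := Fin.ext (by simp <;> omega)
      have ei : (⟨k / 2, by omega⟩ : Fin d) = i := Fin.ext (by simp <;> omega)
      rw [ej, ei, Equiv.Perm.mul_apply, Equiv.swap_apply_left]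
    · by_cases hkj : k = 2 * (j : ℕ) + 1
      · have hm' : ((s ⟨k, hk⟩ : Fin (2 * d)) : ℕ) = 2 * (i : ℕ) + 1 := by
          rw [hm, if_neg hki, if_pos hkj]
        rw [entryVal σ τ hmlt hi hm']
        rw [if_neg (by omega), if_neg (by omega : ¬ k % 2 = 0)]
        have ei : (⟨(2 * (i : ℕ) + 1) / 2, by omega⟩ : Fin d) = i := Fin.ext (by simp <;> omega)
        have ej : (⟨k / 2, by omega⟩ : Fin d) = j := Fin.ext (by simp <;> omega)
        rw [ei, ej, Equiv.Perm.mul_apply, Equiv.swap_apply_right]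
      · have hm' : ((s ⟨k, hk⟩ : Fin (2 * d)) : ℕ) = k := by rw [hm, if_neg hki, if_neg hkj]
        rw [entryVal σ τ hmlt hk hm']
        by_cases hke : k % 2 = 0
        · rw [if_pos hke, if_pos hke]
        · rw [if_neg hke, if_neg hke, Equiv.Perm.mul_apply]
          congr 1
          refine (Equiv.swap_apply_of_ne_of_ne ?_ ?_).symm
          · exact fun h => hki (by have := congrArg Fin.val h; simp at this; omega)
          · exact fun h => hkj (by have := congrArg Fin.val h; simp at this; omega)

lemma swap_gen_mem_Hgrp {d : ℕ} (k : ℕ) (hk : k + 2 < 2 * d) :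
    Equiv.swap (⟨k, by omega⟩ : Fin (2 * d)) ⟨k + 2, hk⟩ ∈ Hgrp d :=
  Subgroup.subset_closure ⟨k, hk, rfl⟩

lemma swap_add_mem_Hgrp {d : ℕ} (m : ℕ) : ∀ p : ℕ, ∀ h : p + 2 * (m + 1) < 2 * d,
    Equiv.swap (⟨p, by omega⟩ : Fin (2 * d)) ⟨p + 2 * (m + 1), h⟩ ∈ Hgrp d := by
  induction m with
  | zero =>
    intro p h
    exact swap_gen_mem_Hgrp (d := d) p (by omega)
  | succ m ih =>
    intro p h
    have hq : p + 2 * (m + 1) + 2 < 2 * d := by omega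
    have hfmem : Equiv.swap (⟨p + 2 * (m + 1), by omega⟩ : Fin (2 * d))
        ⟨p + 2 * (m + 1) + 2, hq⟩ ∈ Hgrp d := swap_gen_mem_Hgrp _ hq
    have hmid : Equiv.swap (⟨p, by omega⟩ : Fin (2 * d)) ⟨p + 2 * (m + 1), by omega⟩ ∈ Hgrp d :=
      ih p (by omega)
    have key := Equiv.swap_apply_apply
      (Equiv.swap (⟨p + 2 * (m + 1), by omega⟩ : Fin (2 * d)) ⟨p + 2 * (m + 1) + 2, hq⟩)
      (⟨p, by omega⟩ : Fin (2 * d)) ⟨p + 2 * (m + 1), by omega⟩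
    rw [Equiv.swap_apply_of_ne_of_ne
        (Fin.ne_of_val_ne (show p ≠ p + 2 * (m + 1) by omega))
        (Fin.ne_of_val_ne (show p ≠ p + 2 * (m + 1) + 2 by omega)),
      Equiv.swap_apply_left,
      show (⟨p + 2 * (m + 1) + 2, hq⟩ : Fin (2 * d)) = ⟨p + 2 * (m + 1 + 1), h⟩ from
        Fin.ext (show p + 2 * (m + 1) + 2 = p + 2 * (m + 1 + 1) by omega)] at key
    rw [key]
    exact Subgroup.mul_mem _ (Subgroup.mul_mem _ hfmem hmid) (Subgroup.inv_mem _ hfmem)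

lemma swap_same_parity_mem_Hgrp {d : ℕ} (p q : ℕ) (hp : p < 2 * d) (hq : q < 2 * d)
    (hpar : p % 2 = q % 2) (hne : p ≠ q) :
    Equiv.swap (⟨p, hp⟩ : Fin (2 * d)) ⟨q, hq⟩ ∈ Hgrp d := by
  rcases Nat.lt_or_ge p q with hlt | hge
  · obtain ⟨m, rfl⟩ : ∃ m, q = p + 2 * (m + 1) := ⟨(q - p) / 2 - 1, by omega⟩
    exact swap_add_mem_Hgrp m p hq
  · have hlt : q < p := by omega
    rw [Equiv.swap_comm]
    obtain ⟨m, rfl⟩ : ∃ m, p = q + 2 * (m + 1) := ⟨(p - q) / 2 - 1, by omega⟩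
    exact swap_add_mem_Hgrp m q hp

lemma sign_mul_swap_val {d : ℕ} (σ : Equiv.Perm (Fin d)) {i j : Fin d} (hij : i ≠ j) :
    ((Equiv.Perm.sign (σ * Equiv.swap i j) : ℤˣ) : ℤ) = -((Equiv.Perm.sign σ : ℤˣ) : ℤ) := by
  rw [map_mul, Equiv.Perm.sign_swap hij]
  simp

lemma permAct_swap_even_invT2 {d : ℕ} (i j : Fin d) (hij : i ≠ j) :
    permAct (2 * d) (Equiv.swap ⟨2 * (i : ℕ), by have := i.isLt; omega⟩
      ⟨2 * (j : ℕ), by have := j.isLt; omega⟩) (invT2 d) = - invT2 d := by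
  conv_lhs => rw [invT2_eq]
  rw [permAct_sum]
  conv_rhs => rw [invT2_eq]
  rw [← Finset.sum_neg_distrib]
  refine Fintype.sum_bijective (fun σ : Equiv.Perm (Fin d) => σ * Equiv.swap i j)
    (Group.mulRight_bijective _) _ _ (fun σ => ?_)
  rw [permAct_sum, ← Finset.sum_neg_distrib]
  refine Finset.sum_congr rfl (fun τ _ => ?_)
  rw [permAct_zsmul, permAct_single, Fmap_swap_even, ← neg_smul]
  congr 1
  rw [sign_mul_swap_val σ hij]
  ring

lemma permAct_swap_odd_invT2 {d : ℕ} (i j : Fin d) (hij : i ≠ j) :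
    permAct (2 * d) (Equiv.swap ⟨2 * (i : ℕ) + 1, by have := i.isLt; omega⟩
      ⟨2 * (j : ℕ) + 1, by have := j.isLt; omega⟩) (invT2 d) = - invT2 d := by
  conv_lhs => rw [invT2_eq]
  rw [permAct_sum]
  conv_rhs => rw [invT2_eq]
  rw [← Finset.sum_neg_distrib]
  refine Finset.sum_congr rfl (fun σ _ => ?_)
  rw [permAct_sum, ← Finset.sum_neg_distrib]
  refine Fintype.sum_bijective (fun τ : Equiv.Perm (Fin d) => τ * Equiv.swap i j)
    (Group.mulRight_bijective _) _ _ (fun τ => ?_)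
  rw [permAct_zsmul, permAct_single, Fmap_swap_odd, ← neg_smul]
  congr 1
  rw [sign_mul_swap_val τ hij]
  ring

lemma permAct_gen_invT2 {d : ℕ} (k : ℕ) (hk : k + 2 < 2 * d) :
    permAct (2 * d) (Equiv.swap (⟨k, by omega⟩ : Fin (2 * d)) ⟨k + 2, hk⟩) (invT2 d)
      = - invT2 d := by
  rcases Nat.even_or_odd k with ⟨c, hc⟩ | ⟨c, hc⟩
  · have hcd : c + 1 < d := by omega
    set i : Fin d := ⟨c, by omega⟩
    set j : Fin d := ⟨c + 1, hcd⟩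
    have hij : i ≠ j := Fin.ne_of_val_ne (show c ≠ c + 1 by omega)
    have heq : Equiv.swap (⟨k, by omega⟩ : Fin (2 * d)) ⟨k + 2, hk⟩
        = Equiv.swap ⟨2 * ((i : Fin d) : ℕ), by have := i.isLt; omega⟩
          ⟨2 * ((j : Fin d) : ℕ), by have := j.isLt; omega⟩ := by
      congr 1
      · exact Fin.ext (show k = 2 * c by omega)
      · exact Fin.ext (show k + 2 = 2 * (c + 1) by omega)
    rw [heq, permAct_swap_even_invT2 i j hij]
  · have hcd : c + 1 < d := by omega
    set i : Fin d := ⟨c, by omega⟩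
    set j : Fin d := ⟨c + 1, hcd⟩
    have hij : i ≠ j := Fin.ne_of_val_ne (show c ≠ c + 1 by omega)
    have heq : Equiv.swap (⟨k, by omega⟩ : Fin (2 * d)) ⟨k + 2, hk⟩
        = Equiv.swap ⟨2 * ((i : Fin d) : ℕ) + 1, by have := i.isLt; omega⟩
          ⟨2 * ((j : Fin d) : ℕ) + 1, by have := j.isLt; omega⟩ := by
      congr 1
      · exact Fin.ext (show k = 2 * c + 1 by omega)
      · exact Fin.ext (show k + 2 = 2 * (c + 1) + 1 by omega)
    rw [heq, permAct_swap_odd_invT2 i j hij]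

lemma permAct_Hgrp_invT2 {d : ℕ} : ∀ h ∈ Hgrp d,
    permAct (2 * d) h (invT2 d) = ((Equiv.Perm.sign h : ℤˣ) : ℤ) • invT2 d := by
  intro h hmem
  induction hmem using Subgroup.closure_induction with
  | mem g hg =>
    obtain ⟨k, hk, rfl⟩ := hg
    rw [permAct_gen_invT2 k hk,
      Equiv.Perm.sign_swap (Fin.ne_of_val_ne (show k ≠ k + 2 by omega))]
    simp
  | one => rw [permAct_one]; simp
  | mul x y hx hy ihx ihy =>
    rw [permAct_mul, ihy, permAct_zsmul, ihx, smul_smul, map_mul]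
    congr 1
    push_cast
    ring
  | inv x hx ih =>
    have h1 : invT2 d = ((Equiv.Perm.sign x : ℤˣ) : ℤ) • permAct (2 * d) x⁻¹ (invT2 d) := by
      conv_lhs => rw [← permAct_one (2 * d) (invT2 d), ← inv_mul_cancel x, permAct_mul, ih,
        permAct_zsmul]
    have h2 : ((Equiv.Perm.sign x : ℤˣ) : ℤ) • invT2 d
        = (((Equiv.Perm.sign x : ℤˣ) : ℤ) * ((Equiv.Perm.sign x : ℤˣ) : ℤ))
            • permAct (2 * d) x⁻¹ (invT2 d) := by
      rw [← smul_smul, ← h1]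
    rw [Equiv.Perm.sign_inv]
    have h3 : ((Equiv.Perm.sign x : ℤˣ) : ℤ) * ((Equiv.Perm.sign x : ℤˣ) : ℤ) = 1 := by
      rw [← Units.val_mul, Int.units_mul_self]; rfl
    rw [h3, one_smul] at h2
    exact h2.symm

lemma getElem_idx_congr {γ : Type*} {w : List γ} {a b : ℕ} (h : a = b) (ha : a < w.length) :
    w[a]'ha = w[b]'(h ▸ ha) := by subst h; rfl

lemma invT2_apply_wordOf {d : ℕ} (α β : Equiv.Perm (Fin d)) :
    invT2 d (wordOf α β)
      = (((Equiv.Perm.sign α : ℤˣ) : ℤ) * ((Equiv.Perm.sign β : ℤˣ) : ℤ) : ℤ) := by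
  rw [invT2_eq, Finsupp.finset_sum_apply]
  rw [Finset.sum_eq_single α]
  · rw [Finsupp.finset_sum_apply, Finset.sum_eq_single β]
    · rw [Finsupp.smul_apply, Finsupp.single_eq_same]
      push_cast
      simp
    · intro τ _ hτ
      rw [Finsupp.smul_apply,
        Finsupp.single_eq_of_ne' (fun hcon => hτ (wordOf_inj hcon).2), smul_zero]
    · intro hc; exact absurd (Finset.mem_univ β) hc
  · intro σ _ hσ
    rw [Finsupp.finset_sum_apply]
    apply Finset.sum_eq_zero
    intro τ _
    rw [Finsupp.smul_apply,
      Finsupp.single_eq_of_ne' (fun hcon => hσ (wordOf_inj hcon).1), smul_zero]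
  · intro hc; exact absurd (Finset.mem_univ α) hc

lemma invT2_apply_of_notWordOf {d : ℕ} (w : List (Fin d))
    (hw : ∀ α β : Equiv.Perm (Fin d), wordOf α β ≠ w) : invT2 d w = 0 := by
  rw [invT2_eq, Finsupp.finset_sum_apply]
  apply Finset.sum_eq_zero
  intro σ _
  rw [Finsupp.finset_sum_apply]
  apply Finset.sum_eq_zero
  intro τ _
  rw [Finsupp.smul_apply, Finsupp.single_eq_of_ne' (hw σ τ), smul_zero]

lemma length_eq_of_invT2_ne_zero {d : ℕ} {w : List (Fin d)} (h : invT2 d w ≠ 0) :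
    w.length = 2 * d := by
  by_contra hlen
  exact h (invT2_apply_of_notWordOf w fun α β hcon =>
    hlen (by rw [← hcon, length_wordOf]))

section Equivariant

variable {d : ℕ} {y : List (Fin d) →₀ ℝ}
  (hy : ∀ h ∈ Hgrp d, permAct (2 * d) h y = ((Equiv.Perm.sign h : ℤˣ) : ℤ) • y)

include hy

lemma equivariant_apply_Fmap {p q : Fin (2 * d)} (hpq : p ≠ q)
    (hmem : Equiv.swap p q ∈ Hgrp d) (w : List (Fin d)) :
    y (Fmap (2 * d) (Equiv.swap p q) w) = - y w := by
  have h1 := permAct_apply_Fmap (2 * d) (Equiv.swap p q) y w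
  rw [hy _ hmem, Equiv.Perm.sign_swap hpq, Finsupp.smul_apply] at h1
  simp at h1
  linarith

lemma equivariant_zero_of_repeat {w : List (Fin d)} (hw : w.length = 2 * d)
    {p q : ℕ} (hp : p < 2 * d) (hq : q < 2 * d) (hpar : p % 2 = q % 2) (hne : p ≠ q)
    (hval : w[p]'(by omega) = w[q]'(by omega)) : y w = 0 := by
  have hfix : Fmap (2 * d) (Equiv.swap ⟨p, hp⟩ ⟨q, hq⟩) w = w := by
    apply List.ext_getElem (by rw [length_Fmap])
    intro k h1 h2
    have hk : k < 2 * d := by rwa [hw] at h2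
    rw [getElem_Fmap _ w hw k hk, Equiv.swap_inv]
    have hm := val_swap_mk p q k hp hq hk
    by_cases hkp : k = p
    · rw [if_pos hkp] at hm
      rw [getElem_idx_congr hm, getElem_idx_congr hkp]
      exact hval.symm
    · by_cases hkq : k = q
      · rw [if_neg hkp, if_pos hkq] at hm
        rw [getElem_idx_congr hm, getElem_idx_congr hkq]
        exact hval
      · rw [if_neg hkp, if_neg hkq] at hm
        rw [getElem_idx_congr hm]
  have hne' : (⟨p, hp⟩ : Fin (2 * d)) ≠ ⟨q, hq⟩ := Fin.ne_of_val_ne hne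
  have hmem := swap_same_parity_mem_Hgrp p q hp hq hpar hne
  have := equivariant_apply_Fmap hy hne' hmem w
  rw [hfix] at this
  linarith

lemma equivariant_wordOf_swap_even (σ τ : Equiv.Perm (Fin d)) {i j : Fin d} (hij : i ≠ j) :
    y (wordOf (σ * Equiv.swap i j) τ) = - y (wordOf σ τ) := by
  rw [← Fmap_swap_even σ τ i j]
  refine equivariant_apply_Fmap hy (Fin.ne_of_val_ne ?_) ?_ _
  · intro hcon
    have h2 : 2 * (i : ℕ) = 2 * (j : ℕ) := hcon
    exact hij (Fin.ext (by omega))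
  · refine swap_same_parity_mem_Hgrp _ _ _ _ (by omega) ?_
    intro hcon
    have h2 : 2 * (i : ℕ) = 2 * (j : ℕ) := hcon
    exact hij (Fin.ext (by omega))

lemma equivariant_wordOf_swap_odd (σ τ : Equiv.Perm (Fin d)) {i j : Fin d} (hij : i ≠ j) :
    y (wordOf σ (τ * Equiv.swap i j)) = - y (wordOf σ τ) := by
  rw [← Fmap_swap_odd σ τ i j]
  refine equivariant_apply_Fmap hy (Fin.ne_of_val_ne ?_) ?_ _
  · intro hcon
    have h2 : 2 * (i : ℕ) + 1 = 2 * (j : ℕ) + 1 := hcon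
    exact hij (Fin.ext (by omega))
  · refine swap_same_parity_mem_Hgrp _ _ _ _ (by omega) ?_
    intro hcon
    have h2 : 2 * (i : ℕ) + 1 = 2 * (j : ℕ) + 1 := hcon
    exact hij (Fin.ext (by omega))

lemma equivariant_wordOf (σ τ : Equiv.Perm (Fin d)) :
    y (wordOf σ τ) = (((Equiv.Perm.sign σ : ℤˣ) : ℤ) : ℝ) * (((Equiv.Perm.sign τ : ℤˣ) : ℤ) : ℝ)
      * y (wordOf 1 1) := by
  have hτ : ∀ τ' σ' : Equiv.Perm (Fin d),
      y (wordOf σ' τ') = (((Equiv.Perm.sign τ' : ℤˣ) : ℤ) : ℝ) * y (wordOf σ' 1) := by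
    intro τ'
    refine Equiv.Perm.swap_induction_on' τ' (fun σ' => by simp) ?_
    intro f a b hab ih σ'
    rw [equivariant_wordOf_swap_odd hy σ' f hab, ih σ', sign_mul_swap_val f hab]
    push_cast
    ring
  have hσ : ∀ σ' : Equiv.Perm (Fin d),
      y (wordOf σ' 1) = (((Equiv.Perm.sign σ' : ℤˣ) : ℤ) : ℝ) * y (wordOf 1 1) := by
    intro σ'
    refine Equiv.Perm.swap_induction_on' σ' (by simp) ?_
    intro f a b hab ih
    rw [equivariant_wordOf_swap_even hy f 1 hab, ih, sign_mul_swap_val f hab]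
    push_cast
    ring
  rw [hτ τ σ, hσ σ]
  ring

end Equivariant

/-- inside the span `V_d` of the `S_{2d}`-orbit of `inv(t_{2,d})`,
the subspace on which `H` acts by the sign character is one-dimensional. -/
theorem sign_isotypic_component_one_dimensional (d : ℕ) (hd : 1 ≤ d) :
    ∃ x : List (Fin d) →₀ ℝ,
      (x ∈ Submodule.span ℝ
          (Set.range fun σ : Equiv.Perm (Fin (2 * d)) =>
            permAct (2 * d) σ (invT2 d)) ∧
        ∀ h ∈ Hgrp d, permAct (2 * d) h x = (Equiv.Perm.sign h : ℤ) • x) ∧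
      x ≠ 0 ∧
      ∀ y : List (Fin d) →₀ ℝ,
        (y ∈ Submodule.span ℝ
            (Set.range fun σ : Equiv.Perm (Fin (2 * d)) =>
              permAct (2 * d) σ (invT2 d)) ∧
          ∀ h ∈ Hgrp d, permAct (2 * d) h y = (Equiv.Perm.sign h : ℤ) • y) →
        ∃ c : ℝ, y = c • x := by
  classical
  refine ⟨invT2 d, ⟨Submodule.subset_span ⟨1, permAct_one (2 * d) (invT2 d)⟩,
    fun h hmem => permAct_Hgrp_invT2 h hmem⟩, ?_, ?_⟩
  · intro h0
    have h1 := invT2_apply_wordOf (1 : Equiv.Perm (Fin d)) 1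
    rw [h0] at h1
    simp at h1
  · rintro y ⟨hspan, hequiv⟩
    refine ⟨y (wordOf 1 1), ?_⟩
    have hy : ∀ h ∈ Hgrp d, permAct (2 * d) h y = ((Equiv.Perm.sign h : ℤˣ) : ℤ) • y := hequiv
    have hsupp : ∀ w : List (Fin d), y w ≠ 0 → w.length = 2 * d := by
      have main : ∀ z ∈ Submodule.span ℝ
          (Set.range fun σ : Equiv.Perm (Fin (2 * d)) => permAct (2 * d) σ (invT2 d)),
          ∀ w : List (Fin d), z w ≠ 0 → w.length = 2 * d := by
        intro z hz
        induction hz using Submodule.span_induction with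
        | mem z hzr =>
          obtain ⟨σ, rfl⟩ := hzr
          intro w hw0
          have hw : (permAct (2 * d) σ (invT2 d)) w ≠ 0 := hw0
          rw [permAct_eq_mapDomain] at hw
          have hw2 : w ∈ (Finsupp.mapDomain (Fmap (2 * d) σ) (invT2 d)).support :=
            Finsupp.mem_support_iff.mpr hw
          obtain ⟨u, hu, rfl⟩ := Finset.mem_image.mp (Finsupp.mapDomain_support hw2)
          rw [length_Fmap]
          exact length_eq_of_invT2_ne_zero (Finsupp.mem_support_iff.mp hu)
        | zero => intro w hw; simp at hw
        | add a b ha hb iha ihb =>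
          intro w hw
          by_cases ha0 : a w = 0
          · exact ihb w (by rw [Finsupp.add_apply, ha0, zero_add] at hw; exact hw)
          · exact iha w ha0
        | smul c a ha iha =>
          intro w hw
          apply iha w
          intro h0
          rw [Finsupp.smul_apply, h0, smul_zero] at hw
          exact hw rfl
      exact main y hspan
    apply Finsupp.ext
    intro w
    rw [Finsupp.smul_apply]
    by_cases hlen : w.length = 2 * d
    · by_cases hinj : Function.Injective
          (fun a : Fin d => w[2 * (a : ℕ)]'(by have := a.isLt; omega))
          ∧ Function.Injective
          (fun a : Fin d => w[2 * (a : ℕ) + 1]'(by have := a.isLt; omega))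
      · obtain ⟨h1, h2⟩ := hinj
        set σ : Equiv.Perm (Fin d) :=
          Equiv.ofBijective _ (Finite.injective_iff_bijective.mp h1) with hσ
        set τ : Equiv.Perm (Fin d) :=
          Equiv.ofBijective _ (Finite.injective_iff_bijective.mp h2) with hτ
        have hw : w = wordOf σ τ := by
          apply List.ext_getElem (by rw [length_wordOf, hlen])
          intro k hk1 hk2
          have hk : k < 2 * d := by rwa [hlen] at hk1
          rw [getElem_wordOf σ τ k hk]
          by_cases hke : k % 2 = 0
          · rw [if_pos hke]
            have hv : σ ⟨k / 2, by omega⟩ = w[2 * (k / 2)]'(by omega) := rfl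
            rw [hv, getElem_idx_congr (show k = 2 * (k / 2) by omega)]
          · rw [if_neg hke]
            have hv : τ ⟨k / 2, by omega⟩ = w[2 * (k / 2) + 1]'(by omega) := rfl
            rw [hv, getElem_idx_congr (show k = 2 * (k / 2) + 1 by omega)]
        rw [hw, equivariant_wordOf hy σ τ, invT2_apply_wordOf σ τ]
        push_cast
        rw [smul_eq_mul]
        ring
      · rw [not_and_or] at hinj
        have hy0 : y w = 0 := by
          rcases hinj with hno | hno
          · rw [Function.not_injective_iff] at hno
            obtain ⟨a, b, hval, hab⟩ := hno
            refine equivariant_zero_of_repeat hy hlen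
              (p := 2 * (a : ℕ)) (q := 2 * (b : ℕ))
              (by have := a.isLt; omega) (by have := b.isLt; omega) (by omega)
              (fun hc => hab (Fin.ext (by omega))) ?_
            exact hval
          · rw [Function.not_injective_iff] at hno
            obtain ⟨a, b, hval, hab⟩ := hno
            refine equivariant_zero_of_repeat hy hlen
              (p := 2 * (a : ℕ) + 1) (q := 2 * (b : ℕ) + 1)
              (by have := a.isLt; omega) (by have := b.isLt; omega) (by omega)
              (fun hc => hab (Fin.ext (by omega))) ?_
            exact hval
        have hi0 : invT2 d w = 0 := by
          apply invT2_apply_of_notWordOf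
          intro α β hcon
          rcases hinj with hno | hno
          · apply hno
            intro a b hab
            have hfa : ∀ c : Fin d, w[2 * (c : ℕ)]'(by have := c.isLt; omega) = α c := by
              intro c
              rw [List.getElem_of_eq hcon.symm,
                getElem_wordOf α β _ (by have := c.isLt; omega),
                if_pos (by omega)]
              congr 1
              exact Fin.ext (show 2 * (c : ℕ) / 2 = (c : ℕ) by omega)
            exact α.injective (by rw [← hfa a, ← hfa b]; exact hab)
          · apply hno
            intro a b hab
            have hfa : ∀ c : Fin d, w[2 * (c : ℕ) + 1]'(by have := c.isLt; omega) = β c := by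
              intro c
              rw [List.getElem_of_eq hcon.symm,
                getElem_wordOf α β _ (by have := c.isLt; omega),
                if_neg (by omega)]
              congr 1
              exact Fin.ext (show (2 * (c : ℕ) + 1) / 2 = (c : ℕ) by omega)
            exact β.injective (by rw [← hfa a, ← hfa b]; exact hab)
        rw [hy0, hi0, smul_zero]
    · have hy0 : y w = 0 := by
        by_contra hc
        exact hlen (hsupp w hc)
      have hi0 : invT2 d w = 0 :=
        invT2_apply_of_notWordOf w fun α β hcon => hlen (by rw [← hcon, length_wordOf])
      rw [hy0, hi0, smul_zero]


end ShufflePaper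
end

section
/- Let A be a commutative ℝ-algebra, let d be a positive even integer, let M ∈ A^{d×d} be skew-symmetric (Mᵀ = −M), let v ∈ A^d and λ ∈ A. Then det(M + λ v vᵀ) = det(M). -/
open Matrix

/-- for a skew-symmetric matrix `M` of even size over a
commutative ℝ-algebra, `det(M + λ v vᵀ) = det(M)`. -/
theorem det_skew_add_rank_one_even (A : Type*) [CommRing A] [Algebra ℝ A]
    (d : ℕ) (hd : 0 < d) (hde : Even d)
    (M : Matrix (Fin d) (Fin d) A) (hM : Mᵀ = -M) (v : Fin d → A) (l : A) :
    (M + Matrix.of fun i j => l * v i * v j).det = M.det := by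
  classical
  set N : Matrix (Fin d) (Fin d) A := Matrix.of fun i j => l * v i * v j with hN
  have hNrow : ∀ i, N i = (l * v i) • v := by
    intro i; funext j; simp [hN, smul_eq_mul, mul_assoc]
  -- multilinear expansion over rows
  have hexp : (M + N).det = ∑ s : Finset (Fin d), Matrix.det (s.piecewise N M) := by
    rw [add_comm]
    exact (Matrix.detRowAlternating.toMultilinearMap.map_add_univ N M)
  -- terms with at least two updated rows vanish
  have hzero : ∀ s : Finset (Fin d), 1 < s.card → Matrix.det (s.piecewise N M) = 0 := by
    intro s hs
    obtain ⟨i, hi, j, hj, hij⟩ := Finset.one_lt_card.mp hs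
    set W := s.piecewise N M with hW
    have hWi : W i = (l * v i) • v := by
      rw [hW]; exact (Finset.piecewise_eq_of_mem _ _ _ hi).trans (hNrow i)
    have hWj : W j = (l * v j) • v := by
      rw [hW]; exact (Finset.piecewise_eq_of_mem _ _ _ hj).trans (hNrow j)
    have hrw : W = (Matrix.updateRow W j ((l * v j) • v)).updateRow i ((l * v i) • v) := by
      rw [← hWi, ← hWj]
      funext a b; simp only [Matrix.updateRow_apply]; split_ifs <;> subst_vars <;> [rfl; exact congrFun (congrFun (Function.update_eq_self j W).symm a) b]
    rw [hrw, Matrix.det_updateRow_smul]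
    have hcomm : (Matrix.updateRow W j ((l * v j) • v)).updateRow i v
        = (Matrix.updateRow W i v).updateRow j ((l * v j) • v) :=
      Function.update_comm hij.symm _ _ _
    rw [hcomm, Matrix.det_updateRow_smul]
    have : ((Matrix.updateRow W i v).updateRow j v).det = 0 := by
      apply Matrix.det_zero_of_row_eq hij
      rw [Matrix.updateRow_ne hij]; exact Matrix.updateRow_self.trans Matrix.updateRow_self.symm
    rw [this, mul_zero, mul_zero]
  -- singleton terms
  have hsing : ∀ i : Fin d, Matrix.det (({i} : Finset (Fin d)).piecewise N M)
      = (l * v i) * Mᵀ.cramer v i := by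
    intro i
    rw [show ({i} : Finset (Fin d)).piecewise N M = Function.update M i (N i) from Finset.piecewise_singleton _ _ _]
    have h1 : Function.update M i (N i) = M.updateRow i ((l * v i) • v) := by
      rw [hNrow]; rfl
    rw [h1, Matrix.det_updateRow_smul, Matrix.cramer_transpose_apply]
  -- the adjugate of M is skew-symmetric
  have hadj : (adjugate M)ᵀ = - adjugate M := by
    rw [Matrix.adjugate_transpose, hM]
    have h1 : (-M) = (-1 : A) • M := by simp
    rw [h1, Matrix.adjugate_smul]
    have hodd : Odd (Fintype.card (Fin d) - 1) := by
      simpa using Nat.Even.sub_odd hd hde odd_one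
    rw [hodd.neg_one_pow, neg_one_smul]
  -- the quadratic form of a skew matrix vanishes
  have hy : v ⬝ᵥ (adjugate M) *ᵥ v = 0 := by
    set y := v ⬝ᵥ (adjugate M) *ᵥ v with hyd
    have h1 : y = -y := by
      conv_lhs => rw [hyd, Matrix.dotProduct_mulVec, ← Matrix.mulVec_transpose, hadj]
      rw [Matrix.neg_mulVec, neg_dotProduct, dotProduct_comm]
    have h2 : (2 : ℝ) • y = 0 := by
      rw [two_smul]; nth_rewrite 1 [h1]; exact neg_add_cancel y
    have h3 : y = (2 : ℝ)⁻¹ • ((2 : ℝ) • y) := by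
      rw [smul_smul]; norm_num
    rw [h3, h2, smul_zero]
  have hx : v ⬝ᵥ (adjugate Mᵀ) *ᵥ v = 0 := by
    rw [← Matrix.adjugate_transpose, hadj, Matrix.neg_mulVec, dotProduct_neg, hy, neg_zero]
  -- sum over all subsets reduces to empty + singletons
  have hsum : ∑ s : Finset (Fin d), Matrix.det (s.piecewise N M)
      = M.det + ∑ i : Fin d, (l * v i) * Mᵀ.cramer v i := by
    have hsub : (insert (∅ : Finset (Fin d))
        (Finset.univ.image fun i => ({i} : Finset (Fin d)))) ⊆ Finset.univ :=
      Finset.subset_univ _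
    rw [← Finset.sum_subset hsub]
    · have hne : (∅ : Finset (Fin d)) ∉ Finset.univ.image fun i => ({i} : Finset (Fin d)) := by
        simp
      rw [Finset.sum_insert hne]
      rw [show Matrix.det ((∅ : Finset (Fin d)).piecewise N M) = M.det by exact congrArg Matrix.det (Finset.piecewise_empty _ _)]
      congr 1
      rw [Finset.sum_image (by intro a _ b _ h; exact Finset.singleton_injective h)]
      exact Finset.sum_congr rfl fun i _ => hsing i
    · intro s _ hs
      apply hzero
      rcases Nat.lt_or_ge 1 s.card with h | h
      · exact h
      · exfalso
        interval_cases h' : s.card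
        · exact hs (by simp [Finset.card_eq_zero.mp h'])
        · obtain ⟨i, rfl⟩ := Finset.card_eq_one.mp h'
          exact hs (by simp)
  -- put everything together
  rw [hexp, hsum]
  have : ∑ i : Fin d, (l * v i) * Mᵀ.cramer v i = 0 := by
    have h1 : ∀ i, (l * v i) * Mᵀ.cramer v i = l * (v i * ((adjugate Mᵀ) *ᵥ v) i) := by
      intro i; rw [Matrix.cramer_eq_adjugate_mulVec, mul_assoc]
    simp_rw [h1]
    rw [← Finset.mul_sum]
    have h2 : ∑ i : Fin d, v i * ((adjugate Mᵀ) *ᵥ v) i = v ⬝ᵥ (adjugate Mᵀ) *ᵥ v := rfl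
    rw [h2, hx, mul_zero]
  rw [this, add_zero]
end

section
/- Let A be a commutative ℝ-algebra, let d be a positive odd integer, let M ∈ A^{d×d} be skew-symmetric (Mᵀ = −M), let v ∈ A^d and λ ∈ A. Then det(M + λ v vᵀ) = Σ_{i=1}^d det(R_i), where R_i is the matrix obtained from M by replacing its i-th row by the i-th row of λ v vᵀ. -/
open Matrix

private lemma two_torsion_free {A : Type*} [AddCommGroup A] [Module ℝ A]
    (x : A) (h : x + x = 0) : x = 0 := by
  have : (2 : ℝ) • x = 0 := by rw [two_smul]; exact h
  have := congrArg (fun y => (1/2 : ℝ) • y) this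
  simpa [smul_smul] using this

/-- for a skew-symmetric matrix `M` of odd size over a commutative
ℝ-algebra, `det(M + λ v vᵀ) = ∑ᵢ det(Rᵢ)`, where `Rᵢ` is `M` with its `i`-th
row replaced by the `i`-th row of `λ v vᵀ`. -/
theorem det_skew_add_rank_one_odd (A : Type*) [CommRing A] [Algebra ℝ A]
    (d : ℕ) (hd : 0 < d) (hdo : Odd d)
    (M : Matrix (Fin d) (Fin d) A) (hM : Mᵀ = -M) (v : Fin d → A) (l : A) :
    (M + Matrix.of fun i j => l * v i * v j).det =
      ∑ i : Fin d, (M.updateRow i fun j => l * v i * v j).det := by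
  set N : Matrix (Fin d) (Fin d) A := Matrix.of fun i j => l * v i * v j with hN
  have hNrow : ∀ i, N i = (l * v i) • v := by
    intro i; funext j; simp [hN, smul_eq_mul, mul_assoc]
  -- determinant of M is zero
  have hdetM : M.det = 0 := by
    have h1 : M.det = -M.det := by
      conv_lhs => rw [← Matrix.det_transpose M, hM, Matrix.det_neg]
      simp [hdo.neg_one_pow]
    exact two_torsion_free _ (by linear_combination h1)
  -- expand determinant via multilinearity
  have key : (M + N).det =
      ∑ s : Finset (Fin d), (Matrix.of (s.piecewise (M : Fin d → Fin d → A) N)).det := by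
    have := (Matrix.detRowAlternating :
        (Fin d → A) [⋀^Fin d]→ₗ[A] A).toMultilinearMap.map_add_univ
        (M : Fin d → Fin d → A) (N : Fin d → Fin d → A)
    exact this
  rw [key]
  -- vanishing of terms with at least two rows from N
  have hvan : ∀ s : Finset (Fin d), ∀ i j : Fin d, i ≠ j → i ∉ s → j ∉ s →
      (Matrix.of (s.piecewise (M : Fin d → Fin d → A) N)).det = 0 := by
    intro s i j hij hi hj
    set X : Matrix (Fin d) (Fin d) A := Matrix.of (s.piecewise (M : Fin d → Fin d → A) N)
    have hXi : X i = (l * v i) • v := by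
      show s.piecewise (M : Fin d → Fin d → A) N i = _
      exact (Finset.piecewise_eq_of_notMem _ _ _ hi).trans (hNrow i)
    have hXj : X j = (l * v j) • v := by
      show s.piecewise (M : Fin d → Fin d → A) N j = _
      exact (Finset.piecewise_eq_of_notMem _ _ _ hj).trans (hNrow j)
    set Y : Matrix (Fin d) (Fin d) A := (X.updateRow i v).updateRow j v with hY
    have e1 : X = (Y.updateRow i ((l * v i) • v)).updateRow j ((l * v j) • v) := by
      ext a b
      rcases eq_or_ne a j with rfl | haj
      · simp [Matrix.updateRow_apply, hXj]
      · rcases eq_or_ne a i with rfl | hai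
        · simp [Matrix.updateRow_apply, hij, haj, hXi]
        · simp [Y, Matrix.updateRow_apply, haj, hai]
    have e2 : (Y.updateRow i ((l * v i) • v)).updateRow j v
        = Y.updateRow i ((l * v i) • v) := by
      ext a b
      rcases eq_or_ne a j with rfl | haj
      · simp [Y, Matrix.updateRow_apply, hij.symm]
      · simp [Matrix.updateRow_apply, haj]
    have e3 : Y.updateRow i v = Y := by
      ext a b
      rcases eq_or_ne a i with rfl | hai
      · simp [Y, Matrix.updateRow_apply, hij]
      · simp [Matrix.updateRow_apply, hai]
    have hYdet : Y.det = 0 := by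
      apply Matrix.det_zero_of_row_eq hij
      simp [Y, Matrix.updateRow_apply, hij, hij.symm]
    rw [e1, Matrix.det_updateRow_smul, e2, Matrix.det_updateRow_smul, e3, hYdet,
      mul_zero, mul_zero]
  -- the only surviving terms are s = {i}ᶜ
  have hsub : (Finset.univ.image fun i : Fin d => ({i}ᶜ : Finset (Fin d)))
      ⊆ Finset.univ := Finset.subset_univ _
  rw [← Finset.sum_subset hsub]
  · rw [Finset.sum_image (by
      intro a _ b _ h
      have := compl_injective h
      exact Finset.singleton_injective this)]
    apply Finset.sum_congr rfl
    intro i _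
    congr 1
    ext a b
    rcases eq_or_ne a i with rfl | hai
    · simp [Matrix.updateRow_apply, Finset.piecewise_eq_of_notMem, Finset.piecewise, hN]
    · simp [Matrix.updateRow_apply, hai, Finset.piecewise_eq_of_mem, Finset.piecewise,
        Finset.mem_compl, hai]
  · intro s _ hs
    rcases eq_or_ne s Finset.univ with rfl | hsu
    · have : Finset.univ.piecewise (M : Fin d → Fin d → A) N = M := by
        funext a; simp [Finset.piecewise]
      rw [this] at *
      exact hdetM
    · -- sᶜ has at least two elements
      have h1 : sᶜ.Nonempty := by
        rw [Finset.nonempty_iff_ne_empty]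
        intro h
        exact hsu (by simpa [Finset.compl_eq_empty_iff] using h)
      have h2 : sᶜ.card ≠ 1 := by
        intro h
        obtain ⟨i, hi⟩ := Finset.card_eq_one.mp h
        exact hs (Finset.mem_image.mpr ⟨i, Finset.mem_univ i, by
          rw [← hi]; simp⟩)
      have h3 : 1 < sᶜ.card := by
        have := Finset.card_pos.mpr h1
        omega
      obtain ⟨i, hi, j, hj, hij⟩ := Finset.one_lt_card.mp h3
      exact hvan s i j hij (Finset.mem_compl.mp hi) (Finset.mem_compl.mp hj)
end
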